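/- Let n ≥ 2 and let p₁ < p₂ < ⋯ < pₙ be prime numbers with 5 ≤ p₁. For each j set ξⱼ = i·√(pⱼ(pⱼ − 2)) ∈ ℂ. Then ξₙ does not belong to the field ℚ(ξ₁, …, ξ_{n−1}). -/

import Mathlib

open Complex

/-- The complex number ξ_p = i·√(p(p−2)). -/
noncomputable def xi (p : ℕ) : ℂ :=
  Complex.I * (Real.sqrt ((p : ℝ) * ((p : ℝ) - 2)) : ℝ)

/-- Step lemma: if `x ∈ closure (K ∪ {y})`, with `x^2, y^2 ∈ K`, then `x ∈ K` or `x*y ∈ K`. -/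
lemma adjoin_sqrt_step (K : Subfield ℂ) (y x : ℂ) (hy : y ^ 2 ∈ K)
    (hx2 : x ^ 2 ∈ K) (hx : x ∈ Subfield.closure (↑K ∪ {y})) :
    x ∈ K ∨ x * y ∈ K := by
  by_cases hyK : y ∈ K
  · left
    have hle : Subfield.closure (↑K ∪ {y}) ≤ K := by
      rw [Subfield.closure_le]
      rintro z (hz | hz)
      · exact hz
      · rwa [Set.mem_singleton_iff.mp hz]
    exact hle hx
  · have key : ∀ a ∈ K, ∀ b ∈ K, a + b * y = 0 → a = 0 ∧ b = 0 := by
      intro a ha b hb h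
      by_cases hb0 : b = 0
      · refine ⟨by simpa [hb0] using h, hb0⟩
      · exfalso
        apply hyK
        have hy' : y = -a / b := by
          field_simp
          linear_combination h
        rw [hy']
        exact Subfield.div_mem K (Subfield.neg_mem K ha) hb
    set S : Subfield ℂ :=
      { carrier := {z | ∃ a ∈ K, ∃ b ∈ K, z = a + b * y}
        zero_mem' := ⟨0, K.zero_mem, 0, K.zero_mem, by ring⟩
        one_mem' := ⟨1, K.one_mem, 0, K.zero_mem, by ring⟩
        add_mem' := by
          rintro u v ⟨a, ha, b, hb, rfl⟩ ⟨c, hc, d, hd, rfl⟩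
          exact ⟨a + c, K.add_mem ha hc, b + d, K.add_mem hb hd, by ring⟩
        neg_mem' := by
          rintro u ⟨a, ha, b, hb, rfl⟩
          exact ⟨-a, K.neg_mem ha, -b, K.neg_mem hb, by ring⟩
        mul_mem' := by
          rintro u v ⟨a, ha, b, hb, rfl⟩ ⟨c, hc, d, hd, rfl⟩
          refine ⟨a * c + b * d * y ^ 2, ?_, a * d + b * c, ?_, by ring⟩
          · exact K.add_mem (K.mul_mem ha hc) (K.mul_mem (K.mul_mem hb hd) hy)
          · exact K.add_mem (K.mul_mem ha hd) (K.mul_mem hb hc)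
        inv_mem' := by
          rintro u ⟨a, ha, b, hb, rfl⟩
          by_cases h0 : a + b * y = 0
          · obtain ⟨ha0, hb0⟩ := key a ha b hb h0
            exact ⟨0, K.zero_mem, 0, K.zero_mem, by simp [ha0, hb0]⟩
          · have hd : a ^ 2 - b ^ 2 * y ^ 2 ≠ 0 := by
              intro hd0
              have hmul : (a + b * y) * (a - b * y) = 0 := by
                rw [show (a + b * y) * (a - b * y) = a ^ 2 - b ^ 2 * y ^ 2 by ring, hd0]
              rcases mul_eq_zero.mp hmul with h | h
              · exact h0 h
              · obtain ⟨ha0, hb0⟩ := key a ha (-b) (K.neg_mem hb) (by linear_combination h)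
                exact h0 (by rw [ha0, neg_eq_zero.mp hb0]; ring)
            refine ⟨a / (a ^ 2 - b ^ 2 * y ^ 2), ?_, -b / (a ^ 2 - b ^ 2 * y ^ 2), ?_, ?_⟩
            · exact K.div_mem ha (K.sub_mem (by simpa [sq] using K.mul_mem ha ha)
                (K.mul_mem (by simpa [sq] using K.mul_mem hb hb) hy))
            · exact K.div_mem (K.neg_mem hb) (K.sub_mem (by simpa [sq] using K.mul_mem ha ha)
                (K.mul_mem (by simpa [sq] using K.mul_mem hb hb) hy))
            · refine (eq_inv_of_mul_eq_one_left ?_).symm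
              field_simp
              ring }
    have hle : Subfield.closure (↑K ∪ {y}) ≤ S := by
      rw [Subfield.closure_le]
      rintro z (hz | hz)
      · exact ⟨z, hz, 0, K.zero_mem, by ring⟩
      · exact ⟨0, K.zero_mem, 1, K.one_mem, by simp [Set.mem_singleton_iff.mp hz]⟩
    obtain ⟨a, ha, b, hb, rfl⟩ := hle hx
    have hsq : (a ^ 2 + b ^ 2 * y ^ 2) + (2 * a * b) * y ∈ K := by
      have : (a + b * y) ^ 2 = (a ^ 2 + b ^ 2 * y ^ 2) + (2 * a * b) * y := by ring
      rwa [this] at hx2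
    have hby : (2 * a * b) * y ∈ K := by
      have h1 : a ^ 2 + b ^ 2 * y ^ 2 ∈ K :=
        K.add_mem (by simpa [sq] using K.mul_mem ha ha)
          (K.mul_mem (by simpa [sq] using K.mul_mem hb hb) hy)
      simpa using K.sub_mem hsq h1
    by_cases hab : a * b = 0
    · rcases mul_eq_zero.mp hab with h | h
      · right
        subst h
        have : (0 + b * y) * y = b * y ^ 2 := by ring
        rw [this]
        exact K.mul_mem hb hy
      · left
        subst h
        simpa using ha
    · exfalso
      apply hyK
      have h2ab : (2 * a * b) ≠ 0 := by
        simp only [mul_ne_zero_iff] at hab ⊢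
        exact ⟨⟨two_ne_zero, hab.1⟩, hab.2⟩
      have : y = ((2 * a * b) * y) / (2 * a * b) := (mul_div_cancel_left₀ y h2ab).symm
      rw [this]
      have h2 : (2 : ℂ) ∈ K := by rw [show (2:ℂ) = 1 + 1 by norm_num]; exact K.add_mem K.one_mem K.one_mem
      exact K.div_mem hby (K.mul_mem (K.mul_mem h2 ha) hb)

lemma adjoin_sqrt_list (L : List ℂ) : ∀ (K : Subfield ℂ),
    (∀ y ∈ L, y ^ 2 ∈ K) → ∀ x : ℂ, x ^ 2 ∈ K →
    x ∈ Subfield.closure (↑K ∪ {z | z ∈ L}) →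
    ∃ T : List ℂ, T.Sublist L ∧ x * T.prod ∈ K := by
  induction L with
  | nil =>
    intro K _ x hx2 hx
    refine ⟨[], List.Sublist.refl _, ?_⟩
    have : Subfield.closure (↑K ∪ {z : ℂ | z ∈ ([] : List ℂ)}) = K := by
      simp [Subfield.closure_eq]
    rw [this] at hx
    simpa using hx
  | cons y L ih =>
    intro K hsq x hx2 hx
    set K₁ := Subfield.closure (↑K ∪ {z | z ∈ L}) with hK₁
    have hKK₁ : K ≤ K₁ := fun z hz => Subfield.subset_closure (Or.inl hz)
    have hy2 : y ^ 2 ∈ K₁ := hKK₁ (hsq y (List.mem_cons_self))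
    have hx2' : x ^ 2 ∈ K₁ := hKK₁ hx2
    have hx' : x ∈ Subfield.closure (↑K₁ ∪ {y}) := by
      refine Subfield.closure_le.mpr ?_ hx
      rintro z (hz | hz)
      · exact Subfield.subset_closure (Or.inl (hKK₁ hz))
      · rcases List.mem_cons.mp hz with rfl | hz
        · exact Subfield.subset_closure (Or.inr rfl)
        · exact Subfield.subset_closure (Or.inl (Subfield.subset_closure (Or.inr hz)))
    have hsq' : ∀ w ∈ L, w ^ 2 ∈ K := fun w hw => hsq w (List.mem_cons_of_mem y hw)
    rcases adjoin_sqrt_step K₁ y x hy2 hx2' hx' with h | h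
    · obtain ⟨T, hT, hxT⟩ := ih K hsq' x hx2 h
      exact ⟨T, hT.cons y, hxT⟩
    · have hxy2 : (x * y) ^ 2 ∈ K := by
        rw [mul_pow]
        exact K.mul_mem hx2 (hsq y (List.mem_cons_self))
      obtain ⟨T, hT, hxT⟩ := ih K hsq' (x * y) hxy2 h
      refine ⟨y :: T, hT.cons₂ y, ?_⟩
      rw [List.prod_cons, show x * (y * T.prod) = x * y * T.prod by ring]
      exact hxT

lemma prod_form (q : ℕ) (hq : q.Prime) (T : List ℂ)
    (h : ∀ z ∈ T, ∃ m : ℕ, 0 < m ∧ ¬ q ∣ m ∧ z = I * Real.sqrt (m : ℝ)) :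
    ∃ k M : ℕ, 0 < M ∧ ¬ q ∣ M ∧
      T.prod = I ^ k * (Real.sqrt (M : ℝ) : ℝ) := by
  induction T with
  | nil =>
    refine ⟨0, 1, one_pos, ?_, by simp⟩
    intro hd
    exact hq.one_lt.ne' (Nat.dvd_one.mp hd)
  | cons z T ih =>
    obtain ⟨m, hm, hqm, rfl⟩ := h z (List.mem_cons_self)
    obtain ⟨k, M, hM, hqM, hprod⟩ := ih (fun w hw => h w (List.mem_cons_of_mem _ hw))
    refine ⟨k + 1, m * M, Nat.mul_pos hm hM, ?_, ?_⟩
    · intro hd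
      rcases (Nat.Prime.dvd_mul hq).mp hd with h' | h'
      · exact hqm h'
      · exact hqM h'
    · rw [List.prod_cons, hprod]
      have : Real.sqrt ((m * M : ℕ) : ℝ) = Real.sqrt m * Real.sqrt M := by
        push_cast
        exact Real.sqrt_mul (Nat.cast_nonneg m) _
      rw [this]
      push_cast
      ring


lemma xi_eq (r : ℕ) (hr : 2 ≤ r) :
    xi r = I * ((Real.sqrt ((r * (r - 2) : ℕ) : ℝ) : ℝ) : ℂ) := by
  unfold xi
  congr 3
  push_cast [Nat.cast_sub hr]
  ring

lemma xi_sq (r : ℕ) (hr : 2 ≤ r) :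
    xi r ^ 2 = -(((r * (r - 2) : ℕ) : ℚ) : ℂ) := by
  rw [xi_eq r hr, mul_pow, Complex.I_sq, ← Complex.ofReal_pow,
    Real.sq_sqrt (Nat.cast_nonneg _)]
  push_cast
  ring

/-- For primes 5 ≤ p₁ < ⋯ < p_{n+1} (at least two primes), the last number
ξ_{n+1} does not lie in ℚ(ξ₁,…,ξₙ). -/
theorem xi_last_not_mem_adjoin (n : ℕ) (hn : 1 ≤ n) (p : Fin (n + 1) → ℕ)
    (hp : ∀ j, (p j).Prime) (hmono : StrictMono p) (h5 : ∀ j, 5 ≤ p j) :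
    xi (p (Fin.last n)) ∉
      IntermediateField.adjoin ℚ (Set.range fun j : Fin n => xi (p j.castSucc)) := by
  intro hmem
  set pL := p (Fin.last n) with hpL
  have hqprime : pL.Prime := hp _
  have hq5 : 5 ≤ pL := h5 _
  set K₀ := (algebraMap ℚ ℂ).fieldRange with hK₀
  set L : List ℂ := (List.finRange n).map (fun j => xi (p j.castSucc)) with hL
  have hset : {z : ℂ | z ∈ L} = Set.range (fun j : Fin n => xi (p j.castSucc)) := by
    ext z
    simp [hL]
  -- transfer membership to subfield closure
  have hmem' : xi pL ∈ Subfield.closure (↑K₀ ∪ {z : ℂ | z ∈ L}) := by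
    have h1 : xi pL ∈ (IntermediateField.adjoin ℚ
        (Set.range fun j : Fin n => xi (p j.castSucc))).toSubfield := hmem
    rw [IntermediateField.adjoin_toSubfield] at h1
    rwa [hset, RingHom.coe_fieldRange]
  -- squares are rational
  have hsq : ∀ y ∈ L, y ^ 2 ∈ K₀ := by
    intro y hy
    rw [hL, List.mem_map] at hy
    obtain ⟨j, -, rfl⟩ := hy
    refine ⟨-((p j.castSucc * (p j.castSucc - 2) : ℕ) : ℚ), ?_⟩
    rw [xi_sq _ (by have := h5 j.castSucc; omega)]
    push_cast
    ring
  have hx2 : xi pL ^ 2 ∈ K₀ := by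
    refine ⟨-((pL * (pL - 2) : ℕ) : ℚ), ?_⟩
    rw [xi_sq _ (by omega)]
    push_cast
    ring
  obtain ⟨T, hT, hmemK⟩ := adjoin_sqrt_list L K₀ hsq (xi pL) hx2 hmem'
  -- description of elements of T
  have hTprop : ∀ z ∈ T, ∃ m : ℕ, 0 < m ∧ ¬ pL ∣ m ∧ z = I * Real.sqrt (m : ℝ) := by
    intro z hz
    have hzL : z ∈ L := hT.subset hz
    rw [hL, List.mem_map] at hzL
    obtain ⟨j, -, rfl⟩ := hzL
    set r := p j.castSucc with hr
    have hr5 : 5 ≤ r := h5 _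
    have hrlt : r < pL := hmono (Fin.castSucc_lt_last j)
    refine ⟨r * (r - 2), Nat.mul_pos (by omega) (by omega), ?_, xi_eq r (by omega)⟩
    intro hd
    rcases (Nat.Prime.dvd_mul hqprime).mp hd with h' | h'
    · exact absurd (Nat.le_of_dvd (by omega) h') (by omega)
    · exact absurd (Nat.le_of_dvd (by omega) h') (by omega)
  obtain ⟨k, M, hM, hqM, hprod⟩ := prod_form pL hqprime T hTprop
  obtain ⟨q, hq⟩ := hmemK
  -- compute x * T.prod
  set N := pL * (pL - 2) * M with hN
  have hNpos : 0 < N := Nat.mul_pos (Nat.mul_pos (by omega) (by omega)) hM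
  have heq : (q : ℂ) = I ^ (k + 1) * ((Real.sqrt (N : ℝ) : ℝ) : ℂ) := by
    have h1 : (algebraMap ℚ ℂ) q = (q : ℂ) := by norm_cast
    rw [← h1, hq, hprod, xi_eq pL (by omega)]
    have h2 : Real.sqrt ((N : ℕ) : ℝ) =
        Real.sqrt ((pL * (pL - 2) : ℕ) : ℝ) * Real.sqrt ((M : ℕ) : ℝ) := by
      rw [hN]
      push_cast
      rw [Real.sqrt_mul (by positivity)]
    rw [h2]
    push_cast
    ring
  -- square both sides
  have hsq2 : (q : ℂ) ^ 2 = (-1 : ℂ) ^ (k + 1) * ((N : ℚ) : ℂ) := by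
    rw [heq, mul_pow, ← pow_mul, mul_comm (k+1) 2, pow_mul, Complex.I_sq,
      ← Complex.ofReal_pow, Real.sq_sqrt (Nat.cast_nonneg _)]
    norm_cast
  have hsqQ : q ^ 2 = (-1 : ℚ) ^ (k + 1) * (N : ℚ) := by
    have : ((q ^ 2 : ℚ) : ℂ) = (((-1 : ℚ) ^ (k + 1) * (N : ℚ) : ℚ) : ℂ) := by
      push_cast
      exact hsq2
    exact_mod_cast this
  -- N is not a perfect square
  have hNsq : ¬ IsSquare N := by
    rintro ⟨t, ht⟩
    have hdvd : pL ∣ N := ⟨(pL - 2) * M, by rw [hN]; ring⟩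
    have hdt : pL ∣ t := hqprime.dvd_of_dvd_pow (n := 2) (by rw [sq, ← ht]; exact hdvd)
    obtain ⟨s, rfl⟩ := hdt
    have h2 : pL ∣ (pL - 2) * M := by
      have h3 : pL * ((pL - 2) * M) = pL * (pL * (s * s)) := by
        rw [show pL * (pL * (s * s)) = (pL * s) * (pL * s) by ring, ← ht, hN]; ring
      have := Nat.eq_of_mul_eq_mul_left (by omega : 0 < pL) h3
      exact ⟨s * s, this⟩
    rcases (Nat.Prime.dvd_mul hqprime).mp h2 with h' | h'
    · exact absurd (Nat.le_of_dvd (by omega) h') (by omega)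
    · exact hqM h'
  rcases Nat.even_or_odd (k + 1) with he | ho
  · -- even: N is a rational square
    rw [he.neg_one_pow, one_mul] at hsqQ
    exact hNsq (Rat.isSquare_natCast_iff.mp ⟨q, by rw [← hsqQ]; ring⟩)
  · -- odd: q^2 = -N < 0
    rw [ho.neg_one_pow] at hsqQ
    have h1 : (0 : ℚ) ≤ q ^ 2 := sq_nonneg q
    have h2 : (0 : ℚ) < (N : ℚ) := by exact_mod_cast hNpos
    nlinarith [hsqQ]
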